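/- The function F on S^1 × R^m defined by F(e^{ix}, y) = sin(x - κ⟨y, y₀⟩), where y₀ is a fixed unit vector in R^m and κ ∈ R, satisfies ‖∇F‖² = (1+κ²)(1-F²). -/

import Mathlib

/- STATEMENT 0: The function F on S¹ × ℝ^m defined by F(e^{ix}, y) = sin(x - κ⟨y, y₀⟩),
where y₀ is a fixed unit vector in ℝ^m and κ ∈ ℝ, satisfies ‖∇F‖² = (1+κ²)(1-F²).
We formalize via the Riemannian universal cover ℝ × ℝ^m ≅ ℝ^{m+1} → S¹ × ℝ^m, a local
isometry, under which the lift of F is z ↦ sin(z₀ - κ⟨tail z, y₀⟩) and gradients correspond. -/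
theorem stmt0 (m : ℕ) (κ : ℝ) (y₀ : EuclideanSpace ℝ (Fin m)) (hy₀ : ‖y₀‖ = 1)
    (F : EuclideanSpace ℝ (Fin (m + 1)) → ℝ)
    (hF : ∀ z, F z = Real.sin (z 0 - κ * ∑ i : Fin m, z i.succ * y₀ i)) :
    ∀ z, ‖gradient F z‖ ^ 2 = (1 + κ ^ 2) * (1 - (F z) ^ 2) := by
  intro z
  -- the vector v with v 0 = 1, v i.succ = -κ * y₀ i
  set v : EuclideanSpace ℝ (Fin (m + 1)) :=
    WithLp.toLp 2 (Fin.cons 1 (fun i => -κ * y₀ i) : ∀ _ : Fin (m+1), ℝ) with hv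
  have hvinner : ∀ w : EuclideanSpace ℝ (Fin (m+1)),
      inner ℝ v w = w 0 - κ * ∑ i : Fin m, w i.succ * y₀ i := by
    intro w
    rw [PiLp.inner_apply]
    simp only [RCLike.inner_apply, conj_trivial]
    rw [Fin.sum_univ_succ]
    simp [hv, Finset.mul_sum]
    ring_nf
    congr 1
    · apply Finset.sum_congr rfl
      intro i _
      ring
  have hFv : ∀ w, F w = Real.sin (inner ℝ v w) := by
    intro w; rw [hF, hvinner]
  have hgrad : HasGradientAt F (Real.cos (inner ℝ v z) • v) z := by
    have h1 : HasFDerivAt (fun w : EuclideanSpace ℝ (Fin (m+1)) => inner ℝ v w : _ → ℝ)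
        (innerSL ℝ v) z := (innerSL ℝ v).hasFDerivAt
    have h2 : HasFDerivAt F (Real.cos ((inner ℝ v z : ℝ)) • innerSL ℝ v) z := by
      have := (Real.hasDerivAt_sin (inner ℝ v z)).comp_hasFDerivAt z h1
      refine HasFDerivAt.congr_of_eventuallyEq ?_ (Filter.Eventually.of_forall hFv)
      exact this
    rw [hasGradientAt_iff_hasFDerivAt]
    refine h2.congr_fderiv ?_
    ext w
    simp [real_inner_smul_left, real_inner_comm]
  rw [hgrad.gradient]
  have hnv : ‖v‖ ^ 2 = 1 + κ ^ 2 := by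
    have := EuclideanSpace.norm_eq v
    rw [← real_inner_self_eq_norm_sq]
    rw [PiLp.inner_apply]
    simp only [RCLike.inner_apply, conj_trivial]
    rw [Fin.sum_univ_succ]
    have hy : ∑ i : Fin m, y₀ i * y₀ i = 1 := by
      have : (1:ℝ) = ‖y₀‖ ^ 2 := by rw [hy₀]; norm_num
      rw [this, ← real_inner_self_eq_norm_sq, PiLp.inner_apply]
      simp [sq]
    simp [hv, mul_mul_mul_comm, ← Finset.mul_sum, hy]
    ring
  rw [norm_smul, mul_pow, hFv]
  simp only [Real.norm_eq_abs, sq_abs, hnv]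
  have := Real.sin_sq_add_cos_sq (inner ℝ v z : ℝ)
  nlinarith [Real.sin_sq_add_cos_sq (inner ℝ v z : ℝ)]
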